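/- Let u_1 ≥ ... ≥ u_{2K} ≥ 0 with K ≥ 2. For 1 ≤ i < j ≤ K define r_{i,j} = (u_{2i} − u_{2j-1})(u_{2i-1} − u_{2j}) + (u_{2i-1} − u_{2j-1})(u_{2i} − u_{2j}). Then ∑_{i=k}^{l} u_{2i-1} u_{2i} − (1/(2(2K−1))) ∑_{a=1}^{2K} ∑_{b≠a} u_a u_b = (1/(2K−1)) ∑_{i=1}^{K} ∑_{j=i+1}^{K} r_{i,j}, i.e., the expected per-iteration regret of a round-robin tournament on 2K items equals the average of the inter-pair regrets r_{i,j}. -/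
import Mathlib

open Finset

lemma sum_pair_aux (f : ℕ → ℝ) (K : ℕ) :
    ∑ a ∈ Finset.Icc 1 (2 * K), f a
      = ∑ i ∈ Finset.Icc 1 K, (f (2 * i - 1) + f (2 * i)) := by
  induction K with
  | zero => simp
  | succ n ih =>
    have hR : ∑ i ∈ Finset.Icc 1 (n + 1), (f (2 * i - 1) + f (2 * i))
        = (∑ i ∈ Finset.Icc 1 n, (f (2 * i - 1) + f (2 * i)))
          + (f (2 * (n + 1) - 1) + f (2 * (n + 1))) :=
      Finset.sum_Icc_succ_top (by omega) _
    have hL : ∑ a ∈ Finset.Icc 1 (2 * (n + 1)), f a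
        = (∑ a ∈ Finset.Icc 1 (2 * n), f a + f (2 * n + 1)) + f (2 * n + 2) := by
      have h2 : 2 * (n + 1) = (2 * n + 1) + 1 := by ring
      rw [h2, Finset.sum_Icc_succ_top (by omega), Finset.sum_Icc_succ_top (by omega)]
    have e1 : 2 * (n + 1) - 1 = 2 * n + 1 := by omega
    have e2 : 2 * (n + 1) = 2 * n + 2 := by omega
    rw [hL, hR, ih, e1, e2]
    ring

lemma tri_aux (f : ℕ → ℝ) (K : ℕ) :
    2 * ∑ i ∈ Finset.Icc 1 K, ∑ j ∈ Finset.Icc (i + 1) K, f i * f j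
      = (∑ i ∈ Finset.Icc 1 K, f i) ^ 2 - ∑ i ∈ Finset.Icc 1 K, (f i) ^ 2 := by
  induction K with
  | zero => simp
  | succ n ih =>
    have hout : ∀ (g : ℕ → ℝ), ∑ i ∈ Finset.Icc 1 (n + 1), g i
        = ∑ i ∈ Finset.Icc 1 n, g i + g (n + 1) :=
      fun g => Finset.sum_Icc_succ_top (by omega) g
    rw [hout, hout, hout]
    have hempty : (Finset.Icc (n + 1 + 1) (n + 1) : Finset ℕ) = ∅ :=
      Finset.Icc_eq_empty (by omega)
    rw [hempty, Finset.sum_empty]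
    have hin : ∑ i ∈ Finset.Icc 1 n, ∑ j ∈ Finset.Icc (i + 1) (n + 1), f i * f j
        = ∑ i ∈ Finset.Icc 1 n, (∑ j ∈ Finset.Icc (i + 1) n, f i * f j + f i * f (n + 1)) := by
      refine Finset.sum_congr rfl fun i hi => ?_
      simp only [Finset.mem_Icc] at hi
      exact Finset.sum_Icc_succ_top (by omega) _
    rw [hin, Finset.sum_add_distrib, ← Finset.sum_mul]
    linear_combination ih

lemma tri2_aux (g : ℕ → ℝ) (K : ℕ) :
    ∑ i ∈ Finset.Icc 1 K, ∑ j ∈ Finset.Icc (i + 1) K, (g i + g j)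
      = ((K : ℝ) - 1) * ∑ i ∈ Finset.Icc 1 K, g i := by
  induction K with
  | zero => simp
  | succ n ih =>
    have hout : ∀ (h : ℕ → ℝ), ∑ i ∈ Finset.Icc 1 (n + 1), h i
        = ∑ i ∈ Finset.Icc 1 n, h i + h (n + 1) :=
      fun h => Finset.sum_Icc_succ_top (by omega) h
    rw [hout, hout]
    have hempty : (Finset.Icc (n + 1 + 1) (n + 1) : Finset ℕ) = ∅ :=
      Finset.Icc_eq_empty (by omega)
    rw [hempty, Finset.sum_empty]
    have hin : ∑ i ∈ Finset.Icc 1 n, ∑ j ∈ Finset.Icc (i + 1) (n + 1), (g i + g j)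
        = ∑ i ∈ Finset.Icc 1 n, ((∑ j ∈ Finset.Icc (i + 1) n, (g i + g j)) + (g i + g (n + 1))) := by
      refine Finset.sum_congr rfl fun i hi => ?_
      simp only [Finset.mem_Icc] at hi
      exact Finset.sum_Icc_succ_top (by omega) _
    have hcard : ∑ _i ∈ Finset.Icc 1 n, g (n + 1) = (n : ℝ) * g (n + 1) := by
      rw [Finset.sum_const, Nat.card_Icc]
      simp [nsmul_eq_mul]
    rw [hin, Finset.sum_add_distrib, Finset.sum_add_distrib, hcard, ih]
    push_cast
    ring

/-- Round-robin regret decomposition: for decreasing nonnegative `u` (1-indexed) on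
`{1,...,2K}`, the optimal per-iteration reward minus the average round-robin reward
equals the average of the inter-pair regrets `r_{i,j}`. -/
theorem stmt_6 (K : ℕ) (hK : 2 ≤ K) (u : ℕ → ℝ)
    (hmono : ∀ a b, 1 ≤ a → a ≤ b → b ≤ 2 * K → u b ≤ u a)
    (hnn : ∀ a, 1 ≤ a → a ≤ 2 * K → 0 ≤ u a) :
    (∑ i ∈ Finset.Icc 1 K, u (2 * i - 1) * u (2 * i)) -
        (1 / (2 * (2 * (K : ℝ) - 1))) *
          ∑ a ∈ Finset.Icc 1 (2 * K), ∑ b ∈ (Finset.Icc 1 (2 * K)).erase a, u a * u b =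
      (1 / (2 * (K : ℝ) - 1)) *
        ∑ i ∈ Finset.Icc 1 K, ∑ j ∈ Finset.Icc (i + 1) K,
          ((u (2 * i) - u (2 * j - 1)) * (u (2 * i - 1) - u (2 * j)) +
            (u (2 * i - 1) - u (2 * j - 1)) * (u (2 * i) - u (2 * j))) := by
  set A : ℝ := ∑ i ∈ Finset.Icc 1 K, u (2 * i - 1) * u (2 * i) with hA
  set B : ℝ := ∑ i ∈ Finset.Icc 1 K, (u (2 * i - 1) + u (2 * i)) with hB
  set C : ℝ := ∑ i ∈ Finset.Icc 1 K, (u (2 * i - 1) + u (2 * i)) ^ 2 with hC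
  -- Step 1: the erase double sum equals B^2 - (C - 2A)
  have hS : ∑ a ∈ Finset.Icc 1 (2 * K), u a = B := sum_pair_aux u K
  have hQ : ∑ a ∈ Finset.Icc 1 (2 * K), (u a) ^ 2 = C - 2 * A := by
    rw [sum_pair_aux (fun a => (u a) ^ 2) K, hC, hA, Finset.mul_sum, ← Finset.sum_sub_distrib]
    exact Finset.sum_congr rfl fun i _ => by ring
  have h1 : ∑ a ∈ Finset.Icc 1 (2 * K), ∑ b ∈ (Finset.Icc 1 (2 * K)).erase a, u a * u b
      = B ^ 2 - (C - 2 * A) := by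
    have hinner : ∀ a ∈ Finset.Icc 1 (2 * K),
        ∑ b ∈ (Finset.Icc 1 (2 * K)).erase a, u a * u b
          = u a * B - (u a) ^ 2 := by
      intro a ha
      rw [← Finset.mul_sum, Finset.sum_erase_eq_sub ha, hS]
      ring
    rw [Finset.sum_congr rfl hinner, Finset.sum_sub_distrib, ← Finset.sum_mul, hS, hQ]
    ring
  -- Step 2: the regret double sum
  have hr : ∀ i j : ℕ,
      ((u (2 * i) - u (2 * j - 1)) * (u (2 * i - 1) - u (2 * j)) +
        (u (2 * i - 1) - u (2 * j - 1)) * (u (2 * i) - u (2 * j)))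
      = ((2 * (u (2 * i - 1) * u (2 * i)) + 2 * (u (2 * j - 1) * u (2 * j)))
          - (u (2 * i - 1) + u (2 * i)) * (u (2 * j - 1) + u (2 * j))) := by
    intro i j; ring
  have h2 : ∑ i ∈ Finset.Icc 1 K, ∑ j ∈ Finset.Icc (i + 1) K,
        ((u (2 * i) - u (2 * j - 1)) * (u (2 * i - 1) - u (2 * j)) +
          (u (2 * i - 1) - u (2 * j - 1)) * (u (2 * i) - u (2 * j)))
      = ((K : ℝ) - 1) * (2 * A) - (B ^ 2 - C) / 2 := by
    have hsplit : ∑ i ∈ Finset.Icc 1 K, ∑ j ∈ Finset.Icc (i + 1) K,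
          ((u (2 * i) - u (2 * j - 1)) * (u (2 * i - 1) - u (2 * j)) +
            (u (2 * i - 1) - u (2 * j - 1)) * (u (2 * i) - u (2 * j)))
        = (∑ i ∈ Finset.Icc 1 K, ∑ j ∈ Finset.Icc (i + 1) K,
            ((2 * (u (2 * i - 1) * u (2 * i))) + (2 * (u (2 * j - 1) * u (2 * j)))))
          - ∑ i ∈ Finset.Icc 1 K, ∑ j ∈ Finset.Icc (i + 1) K,
              (u (2 * i - 1) + u (2 * i)) * (u (2 * j - 1) + u (2 * j)) := by
      rw [← Finset.sum_sub_distrib]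
      refine Finset.sum_congr rfl fun i _ => ?_
      rw [← Finset.sum_sub_distrib]
      exact Finset.sum_congr rfl fun j _ => hr i j
    have htri := tri_aux (fun i => u (2 * i - 1) + u (2 * i)) K
    have htri2 := tri2_aux (fun i => 2 * (u (2 * i - 1) * u (2 * i))) K
    have hg : ∑ i ∈ Finset.Icc 1 K, (2 * (u (2 * i - 1) * u (2 * i))) = 2 * A := by
      rw [hA, Finset.mul_sum]
    rw [hsplit, htri2, hg]
    rw [← hB, ← hC] at htri
    linarith [htri]
  rw [h1, h2]
  have hKR : (2 : ℝ) ≤ (K : ℝ) := by exact_mod_cast hK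
  have hD : (2 * (K : ℝ) - 1) ≠ 0 := by nlinarith
  field_simp
  ring
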